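/- Let C be a unit simplex in ℝ^d with centroid c, and let F be a nonempty subset of C with centroid f. Then ‖c − f‖² = (1/2)(1/|F| − 1/|C|). -/
import Mathlib

open Finset
open scoped Classical
local notation "⟪" x ", " y "⟫_ℝ" => @inner ℝ _ _ x y

private lemma key_sum {d : ℕ} (C : Finset (EuclideanSpace ℝ (Fin d)))
    (hunit : ∀ u ∈ C, ∀ v ∈ C, u ≠ v → dist u v = 1)
    (A B : Finset (EuclideanSpace ℝ (Fin d))) (hA : A ⊆ C) (hB : B ⊆ C) :
    ⟪(∑ u ∈ A, u), (∑ v ∈ B, v)⟫_ℝ =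
      ((B.card : ℝ) * ∑ u ∈ A, ‖u‖ ^ 2 + (A.card : ℝ) * ∑ v ∈ B, ‖v‖ ^ 2
        - ((A.card : ℝ) * B.card - ((A ∩ B).card : ℝ))) / 2 := by
  have hinner : ∀ u ∈ A, ∀ v ∈ B,
      ⟪u, v⟫_ℝ = (‖u‖ ^ 2 + ‖v‖ ^ 2 - (if u = v then 0 else 1)) / 2 := by
    intro u hu v hv
    by_cases huv : u = v
    · subst huv
      rw [if_pos rfl, real_inner_self_eq_norm_sq]
      ring
    · have h1 : dist u v = 1 := hunit u (hA hu) v (hB hv) huv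
      have h2 : ‖u - v‖ ^ 2 = 1 := by
        rw [← dist_eq_norm, h1]; norm_num
      have h3 : ‖u - v‖ ^ 2 = ‖u‖ ^ 2 - 2 * ⟪u, v⟫_ℝ + ‖v‖ ^ 2 :=
        norm_sub_sq_real u v
      simp only [if_neg huv]
      linarith [h2, h3]
  have step1 : ⟪(∑ u ∈ A, u), (∑ v ∈ B, v)⟫_ℝ
      = ∑ u ∈ A, ∑ v ∈ B, (‖u‖ ^ 2 + ‖v‖ ^ 2 - (if u = v then (0:ℝ) else 1)) / 2 := by
    rw [sum_inner]
    refine Finset.sum_congr rfl fun u hu => ?_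
    rw [inner_sum]
    exact Finset.sum_congr rfl fun v hv => hinner u hu v hv
  rw [step1]
  have hchi : ∀ u ∈ A, ∑ v ∈ B, (if u = v then (0:ℝ) else 1) =
      (B.card : ℝ) - (if u ∈ B then 1 else 0) := by
    intro u hu
    have : ∑ v ∈ B, (if u = v then (0:ℝ) else 1) =
        ∑ v ∈ B, (1 - if u = v then (1:ℝ) else 0) := by
      apply Finset.sum_congr rfl; intro v hv; by_cases h : u = v <;> simp [h]
    rw [this, Finset.sum_sub_distrib]
    simp [Finset.sum_ite_eq B u (fun _ => (1:ℝ))]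
  have hcard : ∑ u ∈ A, (if u ∈ B then (1:ℝ) else 0) = ((A ∩ B).card : ℝ) := by
    rw [Finset.sum_ite_mem]
    simp
  have expand : ∀ u ∈ A, ∑ v ∈ B, (‖u‖ ^ 2 + ‖v‖ ^ 2 - (if u = v then (0:ℝ) else 1)) / 2
      = ((B.card : ℝ) * ‖u‖ ^ 2 + ∑ v ∈ B, ‖v‖ ^ 2
          - ((B.card : ℝ) - (if u ∈ B then 1 else 0))) / 2 := by
    intro u hu
    rw [← Finset.sum_div]
    congr 1
    rw [Finset.sum_sub_distrib, Finset.sum_add_distrib, Finset.sum_const, hchi u hu]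
    ring
  rw [Finset.sum_congr rfl expand, ← Finset.sum_div]
  congr 1
  rw [Finset.sum_sub_distrib, Finset.sum_add_distrib, Finset.sum_sub_distrib,
    Finset.sum_const, Finset.sum_const, hcard]
  simp only [nsmul_eq_mul, ← Finset.mul_sum]

theorem unit_simplex_centroid_dist (d : ℕ) (C F : Finset (EuclideanSpace ℝ (Fin d)))
    (hF : F.Nonempty) (hFC : F ⊆ C)
    (hunit : ∀ u ∈ C, ∀ v ∈ C, u ≠ v → dist u v = 1)
    (c f : EuclideanSpace ℝ (Fin d))
    (hc : c = (C.card : ℝ)⁻¹ • ∑ v ∈ C, v)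
    (hf : f = (F.card : ℝ)⁻¹ • ∑ v ∈ F, v) :
    ‖c - f‖ ^ 2 = (1 / 2) * (1 / (F.card : ℝ) - 1 / (C.card : ℝ)) := by
  have hFne : (F.card : ℝ) ≠ 0 := by
    have := hF.card_pos; positivity
  have hCne : (C.card : ℝ) ≠ 0 := by
    have : 0 < C.card := (hF.card_pos).trans_le (Finset.card_le_card hFC)
    positivity
  set n : ℝ := (C.card : ℝ)
  set m : ℝ := (F.card : ℝ)
  set Q : ℝ := ∑ u ∈ C, ‖u‖ ^ 2
  set P : ℝ := ∑ u ∈ F, ‖u‖ ^ 2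
  have hCC := key_sum C hunit C C (le_refl C) (le_refl C)
  have hCF := key_sum C hunit C F (le_refl C) hFC
  have hFF := key_sum C hunit F F hFC hFC
  rw [Finset.inter_self] at hCC hFF
  rw [Finset.inter_eq_right.mpr hFC] at hCF
  have hexp : ‖c - f‖ ^ 2 = ⟪c, c⟫_ℝ - 2 * ⟪c, f⟫_ℝ + ⟪f, f⟫_ℝ := by
    rw [← real_inner_self_eq_norm_sq]
    rw [inner_sub_sub_self]
    rw [real_inner_comm f c]
    ring
  rw [hexp, hc, hf]
  rw [real_inner_smul_left, real_inner_smul_left, real_inner_smul_left,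
    real_inner_smul_right, real_inner_smul_right, real_inner_smul_right]
  rw [hCC, hCF, hFF]
  field_simp
  ring
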